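/- Define ⟨n, k⟩_d, for d dividing n+1, as the number of circular permutations of {0,1,...,n} with exactly k+1 cyclic descents that are fixed by adding (n+1)/d modulo n+1 to each letter. Then ⟨dn-1, c-1⟩_d = 0 whenever gcd(c, d) > 1. -/

import Mathlib

/-- Number of cyclic descents of a word `w₀ w₁ ⋯ w_M` on `{0,...,M}` (indices mod `M+1`):
positions `i` with `w i > w (i+1)`. -/
def cyclicDescentCount {M : ℕ} (w : Equiv.Perm (Fin (M + 1))) : ℕ :=
  (Finset.univ.filter (fun i : Fin (M + 1) => w (i + 1) < w i)).card

/-- `⟨M, k⟩_d`-style count: the number of circular permutations of `{0,...,M}` (words on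
all of `{0,...,M}` up to cyclic shift) with exactly `c` cyclic descents that are fixed by
adding `t` modulo `M+1` to each letter (adding `t` to each letter yields a cyclic shift of
the same word).  Each class of words has exactly `M+1` representatives, so we divide. -/
def circCount (M c t : ℕ) : ℕ :=
  ((Finset.univ.filter (fun w : Equiv.Perm (Fin (M + 1)) =>
      cyclicDescentCount w = c ∧
        ∃ s : Fin (M + 1), ∀ i, w (i + s) = w i + (Fin.ofNat (M + 1) t : Fin (M + 1)))).card) / (M + 1)

open Fin.NatCast Fin.CommRing in
lemma aux_no_perm (M n c d : ℕ) (hM : M + 1 = d * n) (hn : 0 < n) (hd : 2 ≤ d)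
    (hgcd : 1 < Nat.gcd c d) (w : Equiv.Perm (Fin (M + 1))) (s : Fin (M + 1))
    (hs : ∀ i, w (i + s) = w i + (n : Fin (M + 1))) :
    cyclicDescentCount w ≠ c := by
  intro hc
  have hnN : n < M + 1 := by nlinarith
  have hN2 : 2 ≤ M + 1 := by nlinarith
  -- descent indicator and integer lift of steps
  set D : Fin (M + 1) → ℤ := fun i => if w (i + 1) < w i then 1 else 0 with hD
  set lift : Fin (M + 1) → ℤ :=
    fun i => (((w (i + 1)).val : ℤ) - ((w i).val : ℤ)) % ((M : ℤ) + 1) with hlift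
  have fact1 : ∀ i, lift i = ((w (i + 1)).val : ℤ) - ((w i).val : ℤ) + ((M : ℤ) + 1) * D i := by
    intro i
    have hne : w (i + 1) ≠ w i := by
      intro hEq
      have h1 : i + 1 = i + 0 := by rw [add_zero]; exact w.injective hEq
      have h2 : (1 : Fin (M + 1)) = 0 := add_left_cancel h1
      rw [Fin.one_eq_zero_iff] at h2
      omega
    have hA : ((w (i + 1)).val : ℤ) < (M : ℤ) + 1 := by exact_mod_cast (w (i + 1)).isLt
    have hA0 : (0 : ℤ) ≤ ((w (i + 1)).val : ℤ) := Int.natCast_nonneg _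
    have hB : ((w i).val : ℤ) < (M : ℤ) + 1 := by exact_mod_cast (w i).isLt
    have hB0 : (0 : ℤ) ≤ ((w i).val : ℤ) := Int.natCast_nonneg _
    have hABne : ((w (i + 1)).val : ℤ) ≠ ((w i).val : ℤ) := by
      intro hEq
      exact hne (Fin.val_injective (by exact_mod_cast hEq))
    simp only [hlift, hD]
    by_cases hlt : w (i + 1) < w i
    · have hvlt : ((w (i + 1)).val : ℤ) < ((w i).val : ℤ) := by
        exact_mod_cast (Fin.lt_def.mp hlt)
      rw [if_pos hlt]
      have e1 : (((w (i + 1)).val : ℤ) - ((w i).val : ℤ)) % ((M : ℤ) + 1)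
          = (((w (i + 1)).val : ℤ) - ((w i).val : ℤ) + ((M : ℤ) + 1) * 1) % ((M : ℤ) + 1) := by
        rw [Int.add_mul_emod_self_left]
      rw [e1, Int.emod_eq_of_lt (by omega) (by omega)]
    · have hvlt : ((w i).val : ℤ) < ((w (i + 1)).val : ℤ) := by
        have : ¬ ((w (i + 1)).val < (w i).val) := fun hh => hlt (Fin.lt_def.mpr hh)
        omega
      rw [if_neg hlt]
      rw [Int.emod_eq_of_lt (by omega) (by omega)]
      ring
  -- total sum of lifts
  have hsum1 : ∑ i, ((w (i + 1)).val : ℤ) = ∑ i, ((w i).val : ℤ) :=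
    Fintype.sum_equiv (Equiv.addRight (1 : Fin (M + 1))) _ _ (fun i => rfl)
  have hsumD : ∑ i, D i = (c : ℤ) := by
    simp only [hD]
    rw [Finset.sum_boole]
    have hcc : cyclicDescentCount w = c := hc
    unfold cyclicDescentCount at hcc
    exact_mod_cast congrArg (Nat.cast : ℕ → ℤ) hcc
  have fact2 : ∑ i, lift i = ((M : ℤ) + 1) * c := by
    calc ∑ i, lift i
        = ∑ i, (((w (i + 1)).val : ℤ) - ((w i).val : ℤ) + ((M : ℤ) + 1) * D i) :=
          Finset.sum_congr rfl (fun i _ => fact1 i)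
      _ = (∑ i, ((w (i + 1)).val : ℤ) - ∑ i, ((w i).val : ℤ)) + ((M : ℤ) + 1) * ∑ i, D i := by
          rw [Finset.sum_add_distrib, Finset.sum_sub_distrib, Finset.mul_sum]
      _ = ((M : ℤ) + 1) * c := by rw [hsum1, hsumD]; ring
  -- shift invariance of lift
  have h3 : ∀ i, lift (i + s) = lift i := by
    intro i
    have e1 : w (i + s + 1) = w (i + 1) + (n : Fin (M + 1)) := by
      have := hs (i + 1); rwa [add_right_comm] at this
    have e2 := hs i
    have vadd : ∀ x : Fin (M + 1),
        (((x + (n : Fin (M + 1))).val : ℤ))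
          = ((x.val : ℤ) + (((n : Fin (M + 1))).val : ℤ)) % ((M : ℤ) + 1) := by
      intro x
      rw [Fin.val_add]
      push_cast
      ring_nf
    simp only [hlift]
    rw [e1, e2, vadd, vadd, ← Int.sub_emod]
    congr 1
    ring
  have h4 : ∀ (u : ℕ) (i : Fin (M + 1)), lift (i + u • s) = lift i := by
    intro u
    induction u with
    | zero => intro i; simp
    | succ u ih => intro i; rw [succ_nsmul, ← add_assoc, h3, ih]
  -- w shifts by multiples
  have h5 : ∀ (u : ℕ) (i : Fin (M + 1)), w (i + u • s) = w i + u • (n : Fin (M + 1)) := by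
    intro u
    induction u with
    | zero => intro i; simp
    | succ u ih =>
      intro i
      rw [succ_nsmul s, ← add_assoc, hs, ih, succ_nsmul, ← add_assoc]
  have hdn0 : d • (n : Fin (M + 1)) = 0 := by
    rw [nsmul_eq_mul, ← Nat.cast_mul, ← hM]
    exact Fin.natCast_self (M + 1)
  have hds : d • s = 0 := by
    have h6 := h5 d 0
    rw [hdn0, add_zero] at h6
    have h7 := w.injective h6
    rwa [zero_add] at h7
  -- s = 0 case
  by_cases hv0 : s.val = 0
  · have hs0 : s = 0 := Fin.val_injective hv0
    have h8 := hs 0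
    rw [hs0, add_zero] at h8
    have h9 : (n : Fin (M + 1)) = 0 := left_eq_add.mp h8
    have h10 := congrArg Fin.val h9
    rw [Fin.val_natCast] at h10
    simp only [Fin.val_zero] at h10
    rw [Nat.mod_eq_of_lt hnN] at h10
    omega
  -- main case
  have hvN : s.val < M + 1 := s.isLt
  have hndvdv : n ∣ s.val := by
    have h11 : (d • s).val = 0 := by rw [hds]; rfl
    have h12 : d • s = ((d * s.val : ℕ) : Fin (M + 1)) := by
      conv_lhs => rw [← Fin.cast_val_eq_self s]
      rw [nsmul_eq_mul, ← Nat.cast_mul]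
    rw [h12, Fin.val_natCast] at h11
    have h13 : (M + 1) ∣ d * s.val := Nat.dvd_of_mod_eq_zero h11
    have h13' : d * n ∣ d * s.val := by rw [← hM]; exact h13
    exact (Nat.mul_dvd_mul_iff_left (show 0 < d by omega)).mp h13'
  obtain ⟨k, hkv⟩ := hndvdv   -- s.val = n * k
  -- functions on ℕ
  set F : ℕ → ℤ := fun j => lift ((j : Fin (M + 1))) with hF
  set G : ℕ → ℤ := fun j => ((w ((j : Fin (M + 1)))).val : ℤ) with hG
  set E : ℕ → ℤ := fun j => D ((j : Fin (M + 1))) with hE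
  have hFj : ∀ j : ℕ, F j = G (j + 1) - G j + ((M : ℤ) + 1) * E j := by
    intro j
    have hcast : ((j + 1 : ℕ) : Fin (M + 1)) = ((j : Fin (M + 1)) + 1) := by push_cast; ring
    simp only [hF, hG, hE, hcast]
    exact fact1 _
  have htel : ∀ m : ℕ, (∑ j ∈ Finset.range m, F j)
      = G m - G 0 + ((M : ℤ) + 1) * ∑ j ∈ Finset.range m, E j := by
    intro m
    rw [Finset.sum_congr rfl (fun j _ => hFj j), Finset.sum_add_distrib,
        Finset.sum_range_sub G, ← Finset.mul_sum]
  have hrangeN : ∑ j ∈ Finset.range (M + 1), F j = ((M : ℤ) + 1) * c := by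
    have h1 : ∑ i : Fin (M + 1), F i.val = ∑ j ∈ Finset.range (M + 1), F j :=
      Fin.sum_univ_eq_sum_range F (M + 1)
    rw [← h1, ← fact2]
    exact Finset.sum_congr rfl (fun i _ => by simp only [hF, Fin.cast_val_eq_self])
  have hPk : ∀ u : ℕ, ∑ j ∈ Finset.range (u * (M + 1)), F j = u * (((M : ℤ) + 1) * c) := by
    intro u
    induction u with
    | zero => simp
    | succ u ih =>
      rw [Nat.succ_mul, Finset.sum_range_add, ih]
      have hcongr : ∀ x ∈ Finset.range (M + 1), F (u * (M + 1) + x) = F x := by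
        intro x _
        simp only [hF]
        congr 1
        apply Fin.val_injective
        rw [Fin.val_natCast, Fin.val_natCast, mul_comm, Nat.mul_add_mod]
      rw [Finset.sum_congr rfl hcongr, hrangeN]
      push_cast; ring
  have hshift : ∀ u x : ℕ, F (u * s.val + x) = F x := by
    intro u x
    have hcast : ((u * s.val + x : ℕ) : Fin (M + 1)) = ((x : ℕ) : Fin (M + 1)) + u • s := by
      conv_rhs => rw [← Fin.cast_val_eq_self s]
      rw [nsmul_eq_mul, ← Nat.cast_mul]
      push_cast; ring
    simp only [hF, hcast, h4]
  have hPv : ∀ u : ℕ, ∑ j ∈ Finset.range (u * s.val), F j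
      = u * (∑ j ∈ Finset.range s.val, F j) := by
    intro u
    induction u with
    | zero => simp
    | succ u ih =>
      rw [Nat.succ_mul, Finset.sum_range_add, ih,
          Finset.sum_congr rfl (fun x _ => hshift u x)]
      push_cast; ring
  -- combine
  have hdvkN : d * s.val = k * (M + 1) := by rw [hkv, hM]; ring
  have hkey1 : (d : ℤ) * (∑ j ∈ Finset.range s.val, F j) = (k : ℤ) * (((M : ℤ) + 1) * c) := by
    have h1 := hPv d
    have h2 := hPk k
    rw [hdvkN] at h1
    rw [h1] at h2
    exact h2
  -- telescoping value of the short sum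
  have hGv : G s.val = ((((w 0).val + n) % (M + 1) : ℕ) : ℤ) := by
    simp only [hG]
    rw [Fin.cast_val_eq_self]
    have h0 := hs 0
    rw [zero_add] at h0
    rw [h0, Fin.val_add, Fin.val_natCast, Nat.mod_eq_of_lt hnN]
  have hG0 : G 0 = (((w 0).val : ℕ) : ℤ) := by
    simp only [hG, Nat.cast_zero]
  have hb0lt : (w 0).val < M + 1 := (w 0).isLt
  have hmZ : ((((w 0).val + n) % (M + 1) : ℕ) : ℤ)
      = ((w 0).val : ℤ) + n - ((M : ℤ) + 1) * ((((w 0).val + n) / (M + 1) : ℕ) : ℤ) := by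
    have h1 : (M + 1) * (((w 0).val + n) / (M + 1)) + ((w 0).val + n) % (M + 1)
        = (w 0).val + n := Nat.div_add_mod _ _
    have h2 : ((M : ℤ) + 1) * ((((w 0).val + n) / (M + 1) : ℕ) : ℤ)
        + ((((w 0).val + n) % (M + 1) : ℕ) : ℤ) = ((w 0).val : ℤ) + n := by
      exact_mod_cast congrArg (Nat.cast : ℕ → ℤ) h1
    linarith
  have hTval : (∑ j ∈ Finset.range s.val, F j)
      = (n : ℤ) + ((M : ℤ) + 1) * ((∑ j ∈ Finset.range s.val, E j)
          - ((((w 0).val + n) / (M + 1) : ℕ) : ℤ)) := by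
    have h1 := htel s.val
    rw [hGv, hG0, hmZ] at h1
    linear_combination h1
  have hNZ : ((M : ℤ) + 1) = (d : ℤ) * n := by exact_mod_cast hM
  have key : (k : ℤ) * c = 1 + (d : ℤ) * ((∑ j ∈ Finset.range s.val, E j)
      - ((((w 0).val + n) / (M + 1) : ℕ) : ℤ)) := by
    have hne : ((d : ℤ) * n) ≠ 0 := by
      have h0 : d * n ≠ 0 := Nat.pos_iff_ne_zero.mp (Nat.mul_pos (by omega) hn)
      exact_mod_cast h0
    apply mul_left_cancel₀ hne
    rw [hTval, hNZ] at hkey1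
    linear_combination (-1 : ℤ) * hkey1
  -- gcd divides 1
  have hdvd : (Nat.gcd c d : ℤ) ∣ 1 := by
    have h1 : (Nat.gcd c d : ℤ) ∣ (c : ℤ) := Int.natCast_dvd_natCast.mpr (Nat.gcd_dvd_left c d)
    have h2 : (Nat.gcd c d : ℤ) ∣ (d : ℤ) := Int.natCast_dvd_natCast.mpr (Nat.gcd_dvd_right c d)
    have h3 : (1 : ℤ) = (k : ℤ) * c - (d : ℤ) * ((∑ j ∈ Finset.range s.val, E j)
        - ((((w 0).val + n) / (M + 1) : ℕ) : ℤ)) := by linarith [key]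
    rw [h3]
    exact dvd_sub (h1.mul_left _) (h2.mul_right _)
  have hle := Int.le_of_dvd one_pos hdvd
  omega

/-- `⟨dn-1, c-1⟩_d = 0` whenever `gcd(c, d) > 1`: there are no circular permutations of
`{0,...,dn-1}` with exactly `c` cyclic descents fixed by adding `(dn)/d = n` modulo `dn`
unless `c` is coprime to `d`. -/
theorem circCount_eq_zero_of_not_coprime (n c d : ℕ)
    (hn : 0 < n) (hc : 0 < c) (hd : 0 < d) (hcd : c < d * n)
    (h : 1 < Nat.gcd c d) :
    circCount (d * n - 1) c n = 0 := by
  have hd2 : 2 ≤ d := by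
    have h1 := Nat.gcd_dvd_right c d
    have h2 := Nat.le_of_dvd hd h1
    omega
  have hM : (d * n - 1) + 1 = d * n := by
    have : 0 < d * n := Nat.mul_pos hd hn
    omega
  unfold circCount
  have hempty : (Finset.univ.filter (fun w : Equiv.Perm (Fin (d * n - 1 + 1)) =>
      cyclicDescentCount w = c ∧
        ∃ s : Fin (d * n - 1 + 1), ∀ i, w (i + s) = w i + (Fin.ofNat (d * n - 1 + 1) n : Fin (d * n - 1 + 1)))) = ∅ := by
    rw [Finset.filter_eq_empty_iff]
    rintro w - ⟨hcdesc, s, hsym⟩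
    exact aux_no_perm (d * n - 1) n c d hM hn hd2 h w s hsym hcdesc
  rw [hempty]
  simp
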